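/- Let a and n be integers with 2 ≤ a ≤ n − 2 and gcd(a,n) = 1. Then the interior of P_{a,n} contains at least two visible lattice points, i.e. V(a,n) ≥ 2. -/

import Mathlib

/-- `(x, y) ∈ ℤ²` lies in the interior of the lattice parallelogram
`P_{a,n} = {t₁·(1,0) + t₂·(a,n) : 0 ≤ t₁, t₂ ≤ 1}`. -/
def inInteriorP (a n : ℤ) (p : ℤ × ℤ) : Prop :=
  ∃ t₁ t₂ : ℝ, 0 < t₁ ∧ t₁ < 1 ∧ 0 < t₂ ∧ t₂ < 1 ∧
    (p.1 : ℝ) = t₁ + t₂ * (a : ℝ) ∧ (p.2 : ℝ) = t₂ * (n : ℝ)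

/-- A lattice point `(x, y) ∈ ℤ²` is visible (from the origin) if `gcd(x, y) = 1`. -/
def VisiblePt (p : ℤ × ℤ) : Prop := Int.gcd p.1 p.2 = 1

/-- `V a n` is the number of visible lattice points in the interior of `P_{a,n}`. -/
noncomputable def V (a n : ℤ) : ℕ :=
  {p : ℤ × ℤ | inInteriorP a n p ∧ VisiblePt p}.ncard

lemma mem_interior_of (a n x y : ℤ) (hn : 0 < n) (hy1 : 0 < y) (hy2 : y < n)
    (hc1 : 0 < x * n - a * y) (hc2 : x * n - a * y < n) : inInteriorP a n (x, y) := by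
  have hnR : (0 : ℝ) < (n : ℝ) := by exact_mod_cast hn
  refine ⟨((x * n - a * y : ℤ) : ℝ) / n, (y : ℝ) / n, ?_, ?_, ?_, ?_, ?_, ?_⟩
  · apply div_pos _ hnR; exact_mod_cast hc1
  · rw [div_lt_one hnR]; exact_mod_cast hc2
  · apply div_pos _ hnR; exact_mod_cast hy1
  · rw [div_lt_one hnR]; exact_mod_cast hy2
  · push_cast; field_simp; ring
  · push_cast; field_simp

/-- For `2 ≤ a ≤ n − 2` with `gcd(a, n) = 1`, the interior of `P_{a,n}`
contains at least two visible lattice points. -/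
theorem two_le_V (a n : ℤ) (ha : 2 ≤ a) (han : a ≤ n - 2)
    (hgcd : Int.gcd a n = 1) : 2 ≤ V a n := by
  have hn : (4 : ℤ) ≤ n := by omega
  have hn0 : (0 : ℤ) < n := by omega
  -- Bezout
  have hbez : a * Int.gcdA a n + n * Int.gcdB a n = 1 := by
    have := Int.gcd_eq_gcd_ab a n
    rw [hgcd] at this; exact_mod_cast this.symm
  set u := Int.gcdA a n with hu
  set v := Int.gcdB a n with hv
  set y : ℤ := (-u) % n with hy
  have hy0 : 0 ≤ y := Int.emod_nonneg _ (by omega)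
  have hyn : y < n := Int.emod_lt_of_pos _ hn0
  have hypos : 0 < y := by
    rcases hy0.lt_or_eq with h | h
    · exact h
    · exfalso
      have hd : n ∣ -u := Int.dvd_of_emod_eq_zero h.symm
      obtain ⟨t, ht⟩ := hd
      have : n ∣ 1 := ⟨-(a * t) + v, by nlinarith [hbez]⟩
      have := Int.le_of_dvd one_pos this
      omega
  have hdvd : n ∣ a * y + 1 := by
    have h1 : (-u) % n = -u - n * ((-u) / n) := by
      rw [Int.emod_def]
    refine ⟨v - a * ((-u) / n), ?_⟩
    rw [hy, h1]
    nlinarith [hbez]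
  set x : ℤ := (a * y + 1) / n with hx
  have hxn : x * n = a * y + 1 := Int.ediv_mul_cancel hdvd
  -- the second point
  have hc : x * n - a * y = 1 := by omega
  have hmem2 : inInteriorP a n (x, y) := mem_interior_of a n x y hn0 hypos hyn (by omega) (by omega)
  have hvis2 : VisiblePt (x, y) := by
    unfold VisiblePt
    have hdx : (Int.gcd x y : ℤ) ∣ x := Int.gcd_dvd_left x y
    have hdy : (Int.gcd x y : ℤ) ∣ y := Int.gcd_dvd_right x y
    have : (Int.gcd x y : ℤ) ∣ 1 := by
      rw [← hc]; exact dvd_sub (hdx.mul_right n) (hdy.mul_left a)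
    have h1 : Int.gcd x y ∣ 1 := by exact_mod_cast this
    exact Nat.dvd_one.mp h1
  have hmem1 : inInteriorP a n (1, 1) :=
    mem_interior_of a n 1 1 hn0 one_pos (by omega) (by omega) (by omega)
  have hvis1 : VisiblePt (1, 1) := by simp [VisiblePt]
  have hne : ((1, 1) : ℤ × ℤ) ≠ (x, y) := by
    intro h
    have h1 : x = 1 := (Prod.mk.injEq _ _ _ _ ▸ h.symm).1
    have h2 : y = 1 := (Prod.mk.injEq _ _ _ _ ▸ h.symm).2
    rw [h1, h2] at hc
    omega
  -- the set is finite
  set S := {p : ℤ × ℤ | inInteriorP a n p ∧ VisiblePt p} with hS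
  have hsub : S ⊆ (Set.Ioo (0 : ℤ) (a + 1)) ×ˢ (Set.Ioo (0 : ℤ) n) := by
    rintro ⟨px, py⟩ ⟨⟨t₁, t₂, h1, h2, h3, h4, h5, h6⟩, -⟩
    have haR : (0 : ℝ) < (a : ℝ) := by exact_mod_cast (by omega : (0:ℤ) < a)
    have hnR : (0 : ℝ) < (n : ℝ) := by exact_mod_cast hn0
    constructor
    · simp only [Set.mem_Ioo]
      constructor
      · have : (0 : ℝ) < (px : ℝ) := by rw [h5]; positivity
        exact_mod_cast this
      · have : (px : ℝ) < (a : ℝ) + 1 := by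
          rw [h5]; nlinarith
        have : (px : ℝ) < ((a + 1 : ℤ) : ℝ) := by push_cast; linarith
        exact_mod_cast this
    · simp only [Set.mem_Ioo]
      constructor
      · have : (0 : ℝ) < (py : ℝ) := by rw [h6]; positivity
        exact_mod_cast this
      · have : (py : ℝ) < (n : ℝ) := by rw [h6]; nlinarith
        exact_mod_cast this
  have hfin : S.Finite :=
    Set.Finite.subset ((Set.finite_Ioo _ _).prod (Set.finite_Ioo _ _)) hsub
  have hpair : ({((1 : ℤ), (1 : ℤ)), (x, y)} : Set (ℤ × ℤ)) ⊆ S := by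
    rintro p hp
    rcases hp with h | h
    · rw [h]; exact ⟨hmem1, hvis1⟩
    · rw [h]; exact ⟨hmem2, hvis2⟩
  have h2card : ({((1 : ℤ), (1 : ℤ)), (x, y)} : Set (ℤ × ℤ)).ncard = 2 :=
    Set.ncard_pair hne
  calc 2 = ({((1 : ℤ), (1 : ℤ)), (x, y)} : Set (ℤ × ℤ)).ncard := h2card.symm
    _ ≤ S.ncard := Set.ncard_le_ncard hpair hfin
    _ = V a n := rfl
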